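/- arXiv:2205.08401 — 4 statements merged into one kernel-verified Lean document; each statement's English description precedes it below -/
import Mathlib

section
/- (Homotopy-category form of the paper's main general theorem, Theorem 3.10/"Li-adj-he".) Suppose i : C ⥤ D is fully faithful and W is a morphism property on C*-A that contains all isomorphisms and satisfies two-out-of-three; let W^i be the right-induced property on D*-A. Then there exists a left adjoint L of i^* such that L sends every morphism of W to a morphism of W^i, i^* sends every morphism of W^i to a morphism of W, and the induced functors L̄ : (C*-A)[W⁻¹] → (D*-A)[(W^i)⁻¹] and ī^* : (D*-A)[(W^i)⁻¹] → (C*-A)[W⁻¹] between the localized categories are mutually quasi-inverse equivalences of categories. -/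
open CategoryTheory CategoryTheory.Limits

universe v u

/-- The category of pointed diagrams: functors `C ⥤ A` sending every zero object of `C`
to a terminal object of `A`. -/
abbrev PtdDiag (C : Type v) [SmallCategory C] (A : Type u) [Category.{v} A] :=
  ObjectProperty.FullSubcategory (fun X : C ⥤ A => ∀ c : C, IsZero c → Nonempty (IsTerminal (X.obj c)))

/-- The restriction (precomposition) functor `i^* : D*-A ⥤ C*-A` induced by a
basepoint-preserving functor `i : C ⥤ D`. -/
def istar {C D : Type v} [SmallCategory C] [SmallCategory D]
    (zC : C) (hzC : IsZero zC) (i : C ⥤ D) (hi : IsZero (i.obj zC))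
    (A : Type u) [Category.{v} A] :
    PtdDiag D A ⥤ PtdDiag C A :=
  ObjectProperty.lift _
    (ObjectProperty.ι _ ⋙ (Functor.whiskeringLeft C D A).obj i)
    (fun Y c hc => Y.property (i.obj c) (hi.of_iso (i.mapIso (hc.iso hzC))))


/-- The functor `E[V⁻¹] ⥤ E'[V'⁻¹]` induced on localizations by a relative functor
`F : E ⥤ E'` (a functor sending morphisms of `V` to morphisms of `V'`); it satisfies
`V.Q ⋙ inducedLoc V V' F h = F ⋙ V'.Q`. -/
noncomputable abbrev inducedLoc {E : Type*} {E' : Type*} [Category E] [Category E']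
    (V : MorphismProperty E) (V' : MorphismProperty E') (F : E ⥤ E')
    (h : ∀ ⦃X Y : E⦄ (f : X ⟶ Y), V f → V' (F.map f)) :
    V.Localization ⥤ V'.Localization :=
  CategoryTheory.Localization.Construction.lift (F ⋙ V'.Q)
    (fun _ _ f hf => Localization.inverts V'.Q V' (F.map f) (h f hf))

/-- Auxiliary: an adjunction whose unit components lie in `V` and whose counit components
lie in `V'` induces mutually quasi-inverse equivalences between the localizations. -/
theorem auxLocEquiv {E E' : Type*} [Category E] [Category E']
    (V : MorphismProperty E) (V' : MorphismProperty E')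
    (F : E ⥤ E') (G : E' ⥤ E) (adj : F ⊣ G)
    (hF : ∀ ⦃X Y : E⦄ (f : X ⟶ Y), V f → V' (F.map f))
    (hG : ∀ ⦃X Y : E'⦄ (f : X ⟶ Y), V' f → V (G.map f))
    (hu : ∀ X, V (adj.unit.app X)) (hc : ∀ Y, V' (adj.counit.app Y)) :
    Nonempty (inducedLoc V V' F hF ⋙ inducedLoc V' V G hG ≅ 𝟭 V.Localization) ∧
    Nonempty (inducedLoc V' V G hG ⋙ inducedLoc V V' F hF ≅ 𝟭 V'.Localization) := by
  constructor
  · haveI : Localization.Lifting V.Q V ((F ⋙ G) ⋙ V.Q)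
        (inducedLoc V V' F hF ⋙ inducedLoc V' V G hG) := by
      refine ⟨eqToIso ?_⟩
      calc V.Q ⋙ (inducedLoc V V' F hF ⋙ inducedLoc V' V G hG)
          = (V.Q ⋙ inducedLoc V V' F hF) ⋙ inducedLoc V' V G hG := rfl
        _ = (F ⋙ V'.Q) ⋙ inducedLoc V' V G hG := by
            exact congrArg (· ⋙ inducedLoc V' V G hG) (Localization.Construction.fac _ _)
        _ = F ⋙ (V'.Q ⋙ inducedLoc V' V G hG) := rfl
        _ = F ⋙ (G ⋙ V.Q) := by exact congrArg (F ⋙ ·) (Localization.Construction.fac _ _)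
        _ = (F ⋙ G) ⋙ V.Q := rfl
    haveI : ∀ X, IsIso ((Functor.whiskerRight adj.unit V.Q).app X) := fun X => by
      simpa using Localization.inverts V.Q V (adj.unit.app X) (hu X)
    haveI : IsIso (Functor.whiskerRight adj.unit V.Q) := NatIso.isIso_of_isIso_app _
    exact ⟨Localization.liftNatIso V.Q V ((F ⋙ G) ⋙ V.Q) V.Q
      (inducedLoc V V' F hF ⋙ inducedLoc V' V G hG) (𝟭 _)
      ((asIso (Functor.whiskerRight adj.unit V.Q)).symm ≪≫ V.Q.leftUnitor)⟩
  · haveI : Localization.Lifting V'.Q V' ((G ⋙ F) ⋙ V'.Q)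
        (inducedLoc V' V G hG ⋙ inducedLoc V V' F hF) := by
      refine ⟨eqToIso ?_⟩
      calc V'.Q ⋙ (inducedLoc V' V G hG ⋙ inducedLoc V V' F hF)
          = (V'.Q ⋙ inducedLoc V' V G hG) ⋙ inducedLoc V V' F hF := rfl
        _ = (G ⋙ V.Q) ⋙ inducedLoc V V' F hF := by
            exact congrArg (· ⋙ inducedLoc V V' F hF) (Localization.Construction.fac _ _)
        _ = G ⋙ (V.Q ⋙ inducedLoc V V' F hF) := rfl
        _ = G ⋙ (F ⋙ V'.Q) := by exact congrArg (G ⋙ ·) (Localization.Construction.fac _ _)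
        _ = (G ⋙ F) ⋙ V'.Q := rfl
    haveI : ∀ Y, IsIso ((Functor.whiskerRight adj.counit V'.Q).app Y) := fun Y => by
      simpa using Localization.inverts V'.Q V' (adj.counit.app Y) (hc Y)
    haveI : IsIso (Functor.whiskerRight adj.counit V'.Q) := NatIso.isIso_of_isIso_app _
    exact ⟨Localization.liftNatIso V'.Q V' ((G ⋙ F) ⋙ V'.Q) V'.Q
      (inducedLoc V' V G hG ⋙ inducedLoc V V' F hF) (𝟭 _)
      (asIso (Functor.whiskerRight adj.counit V'.Q) ≪≫ V'.Q.leftUnitor)⟩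

section LKE

variable {C D : Type v} [SmallCategory C] [SmallCategory D]
    (zC : C) (hzC : IsZero zC) (i : C ⥤ D) (hi : IsZero (i.obj zC))
    [i.Full] [i.Faithful]
    (A : Type u) [Category.{v} A] [HasColimits A]

/-- The left Kan extension functor restricted to pointed diagrams. -/
noncomputable def Lptd : PtdDiag C A ⥤ PtdDiag D A :=
  ObjectProperty.lift _ (ObjectProperty.ι _ ⋙ i.lan)
    (fun X d hd => ⟨IsTerminal.ofIso
      (IsTerminal.ofIso (X.property zC hzC).some (asIso ((i.lanUnit.app X.obj).app zC)))
      ((i.lan.obj X.obj).mapIso (hi.iso hd))⟩)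

/-- The restricted adjunction `Lptd ⊣ istar`. -/
noncomputable def LptdAdj : Lptd zC hzC i hi A ⊣ istar zC hzC i hi A :=
  (i.lanAdjunction A).restrictFullyFaithful
    (Functor.FullyFaithful.ofFullyFaithful (ObjectProperty.ι _))
    (Functor.FullyFaithful.ofFullyFaithful (ObjectProperty.ι _))
    (ObjectProperty.liftCompιIso _ _ _).symm
    (ObjectProperty.liftCompιIso _ _ _).symm

instance Lptd_full : (Lptd zC hzC i hi A).Full := by
  haveI hff : Functor.FullyFaithful (i.lan : (C ⥤ A) ⥤ (D ⥤ A)) :=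
    (i.lanAdjunction A).fullyFaithfulLOfIsIsoUnit
  haveI := hff.full
  haveI := hff.faithful
  exact inferInstanceAs (ObjectProperty.lift _ _ _).Full

instance Lptd_faithful : (Lptd zC hzC i hi A).Faithful := by
  haveI hff : Functor.FullyFaithful (i.lan : (C ⥤ A) ⥤ (D ⥤ A)) :=
    (i.lanAdjunction A).fullyFaithfulLOfIsIsoUnit
  haveI := hff.full
  haveI := hff.faithful
  exact inferInstanceAs (ObjectProperty.lift _ _ _).Faithful

end LKE

/-- **Theorem `Li-adj-he`** (homotopy-category form). Suppose `i : C ⥤ D` is fully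
faithful and `W` is a morphism property on `C*-A` containing all isomorphisms and
satisfying two-out-of-three, with right-induced property `W^i = (i^*)⁻¹ W` on `D*-A`.
Then there is a left adjoint `L` of `i^*` sending `W` into `W^i` (while `i^*` sends
`W^i` into `W` by definition), such that the induced functors `L̄` and `ī^*` between
the localized categories are mutually quasi-inverse equivalences of categories. -/
theorem Li_adj_he {C D : Type v} [SmallCategory C] [SmallCategory D]
    (zC : C) (hzC : IsZero zC) (i : C ⥤ D) (hi : IsZero (i.obj zC))
    [i.Full] [i.Faithful]
    (A : Type u) [Category.{v} A] [HasLimits A] [HasColimits A]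
    (W : MorphismProperty (PtdDiag C A))
    (hiso : MorphismProperty.isomorphisms (PtdDiag C A) ≤ W)
    (h23 : W.HasTwoOutOfThreeProperty) :
    ∃ (L : PtdDiag C A ⥤ PtdDiag D A) (_ : L ⊣ istar zC hzC i hi A)
      (hL : ∀ ⦃X Y : PtdDiag C A⦄ (f : X ⟶ Y), W f →
        (W.inverseImage (istar zC hzC i hi A)) (L.map f)),
      Nonempty (inducedLoc W (W.inverseImage (istar zC hzC i hi A)) L hL ⋙
          inducedLoc (W.inverseImage (istar zC hzC i hi A)) W (istar zC hzC i hi A)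
            (fun _ _ _ hf => hf) ≅ 𝟭 W.Localization) ∧
      Nonempty (inducedLoc (W.inverseImage (istar zC hzC i hi A)) W (istar zC hzC i hi A)
            (fun _ _ _ hf => hf) ⋙
          inducedLoc W (W.inverseImage (istar zC hzC i hi A)) L hL ≅
          𝟭 (W.inverseImage (istar zC hzC i hi A)).Localization) := by
  haveI := h23
  set R := istar zC hzC i hi A with hRdef
  set L := Lptd zC hzC i hi A with hLdef
  set adj := LptdAdj zC hzC i hi A with hadjdef
  -- unit components are isomorphisms, hence in `W`
  have hu : ∀ X, W (adj.unit.app X) := fun X => hiso _ (inferInstance : IsIso _)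
  -- `L` maps `W` into `W^i`
  have hL : ∀ ⦃X Y : PtdDiag C A⦄ (f : X ⟶ Y), W f →
      (W.inverseImage R) (L.map f) := by
    intro X Y f hf
    have hnat : adj.unit.app X ≫ R.map (L.map f) = f ≫ adj.unit.app Y := by
      exact (adj.unit.naturality f).symm
    have : W (adj.unit.app X ≫ R.map (L.map f)) := by
      rw [hnat]; exact W.comp_mem _ _ hf (hu Y)
    exact W.of_precomp _ _ (hu X) this
  -- counit components are in `W^i`
  have hc : ∀ Y, (W.inverseImage R) (adj.counit.app Y) := by
    intro Y
    have htri : adj.unit.app (R.obj Y) ≫ R.map (adj.counit.app Y) = 𝟙 _ :=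
      adj.right_triangle_components Y
    have : W (adj.unit.app (R.obj Y) ≫ R.map (adj.counit.app Y)) := by
      rw [htri]; exact hiso _ (inferInstance : IsIso _)
    exact W.of_precomp _ _ (hu (R.obj Y)) this
  exact ⟨L, adj, hL, auxLocEquiv W (W.inverseImage R) L R adj hL
    (fun _ _ _ hf => hf) hu hc⟩
end

section
/- (Proposition "Li-adj".) The precomposition functor i^* : D*-A ⥤ C*-A admits a left adjoint L, i.e., there is an adjunction L ⊣ i^* of categories L : C*-A ⥤ D*-A and i^* : D*-A ⥤ C*-A. -/
open CategoryTheory CategoryTheory.Limits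

universe v u

namespace LiAdjAux
noncomputable section

variable {D : Type v} [SmallCategory D] {A : Type u} [Category.{v} A]
  [HasLimits A] [HasColimits A]

variable (zD : D) (hzD : IsZero zD) (Z : D ⥤ A)

def alphaN : (Functor.const D).obj (Z.obj zD) ⟶ Z where
  app d := Z.map (hzD.to_ d)
  naturality d d' u := by
    dsimp
    rw [Category.id_comp, ← Z.map_comp]
    congr 1
    exact hzD.eq_of_src _ _

def betaN : (Functor.const D).obj (Z.obj zD) ⟶ (Functor.const D).obj (⊤_ A) :=
  (Functor.const D).map (terminal.from (Z.obj zD))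

def plusF : D ⥤ A := pushout (alphaN zD hzD Z) (betaN zD Z)

lemma alphaN_app_z : (alphaN zD hzD Z).app zD = 𝟙 _ := by
  dsimp [alphaN]
  rw [show hzD.to_ zD = 𝟙 zD from hzD.eq_of_src _ _, Z.map_id]

def idPushoutTerminal (X : A) : IsTerminal (pushout (𝟙 X) (terminal.from X)) :=
  terminalIsTerminal.ofIso
    ((IsPushout.of_horiz_isIso (f := 𝟙 X) (g := terminal.from X)
      (inl := terminal.from X) (inr := 𝟙 (⊤_ A)) ⟨by simp⟩).isoPushout)

example : (((evaluation D A).obj zD).map (alphaN zD hzD Z)) = (alphaN zD hzD Z).app zD := rfl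
example : ((evaluation D A).obj zD).obj (pushout (alphaN zD hzD Z) (betaN zD Z)) = (plusF zD hzD Z).obj zD := rfl

def plusTerminalAtZ : IsTerminal ((plusF zD hzD Z).obj zD) := by
  refine IsTerminal.ofIso (idPushoutTerminal (Z.obj zD)) ?_
  have e2 : pushout ((alphaN zD hzD Z).app zD) ((betaN zD Z).app zD) ≅ (plusF zD hzD Z).obj zD :=
    PreservesPushout.iso ((evaluation D A).obj zD) (alphaN zD hzD Z) (betaN zD Z)
  exact (pushout.congrHom (alphaN_app_z zD hzD Z) rfl).symm ≪≫ e2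

def toTerm (W : D ⥤ A) (hW : IsTerminal (W.obj zD)) :
    (Functor.const D).obj (⊤_ A) ⟶ W where
  app d := hW.from (⊤_ A) ≫ W.map (hzD.to_ d)
  naturality d d' u := by
    dsimp
    rw [Category.id_comp, Category.assoc, ← W.map_comp]
    congr 2
    exact hzD.eq_of_src _ _

include hzD in
lemma toTerm_unique (W : D ⥤ A) (hW : IsTerminal (W.obj zD))
    (g g' : (Functor.const D).obj (⊤_ A) ⟶ W) : g = g' := by
  ext d
  have h1 := g.naturality (hzD.to_ d)
  have h2 := g'.naturality (hzD.to_ d)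
  dsimp at h1 h2
  rw [Category.id_comp] at h1 h2
  rw [h1, h2, hW.hom_ext (g.app zD) (g'.app zD)]

def plusEquiv (W : D ⥤ A) (hW : IsTerminal (W.obj zD)) :
    (plusF zD hzD Z ⟶ W) ≃ (Z ⟶ W) where
  toFun h := pushout.inl _ _ ≫ h
  invFun f := pushout.desc f (toTerm zD hzD W hW) (by
    ext d
    have h1 := f.naturality (hzD.to_ d)
    dsimp [alphaN, betaN, toTerm] at h1 ⊢
    rw [h1, ← Category.assoc]
    congr 1
    exact hW.hom_ext _ _)
  left_inv h := by
    refine pushout.hom_ext ?_ ?_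
    · exact pushout.inl_desc _ _ _
    · rw [pushout.inr_desc]
      exact toTerm_unique zD hzD W hW _ _
  right_inv f := by exact pushout.inl_desc _ _ _

include hzD in
def plusTerminalAt (d : D) (hd : IsZero d) : IsTerminal ((plusF zD hzD Z).obj d) :=
  IsTerminal.ofIso (plusTerminalAtZ zD hzD Z) ((plusF zD hzD Z).mapIso (hzD.iso hd))

end
end LiAdjAux

/-- **Proposition `Li-adj`.** The precomposition functor `i^* : D*-A ⥤ C*-A`
admits a left adjoint `L`. -/
theorem istar_hasLeftAdjoint {C D : Type v} [SmallCategory C] [SmallCategory D]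
    (zC : C) (hzC : IsZero zC) (i : C ⥤ D) (hi : IsZero (i.obj zC))
    (A : Type u) [Category.{v} A] [HasLimits A] [HasColimits A] :
    ∃ L : PtdDiag C A ⥤ PtdDiag D A, Nonempty (L ⊣ istar zC hzC i hi A) := by
  classical
  let adj := i.lanAdjunction A
  let Fobj : PtdDiag C A → PtdDiag D A := fun X =>
    ⟨LiAdjAux.plusF (i.obj zC) hi (i.lan.obj X.obj),
     fun d hd => ⟨LiAdjAux.plusTerminalAt (i.obj zC) hi (i.lan.obj X.obj) d hd⟩⟩
  have hterm : ∀ Y : PtdDiag D A, IsTerminal (Y.obj.obj (i.obj zC)) :=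
    fun Y => (Y.property _ hi).some
  let e : ∀ (X : PtdDiag C A) (Y : PtdDiag D A),
      (Fobj X ⟶ Y) ≃ (X ⟶ (istar zC hzC i hi A).obj Y) := fun X Y =>
    InducedCategory.homEquiv.trans
    (((LiAdjAux.plusEquiv (i.obj zC) hi (i.lan.obj X.obj) Y.obj (hterm Y)).trans
      (adj.homEquiv X.obj Y.obj)).trans
      (InducedCategory.homEquiv (X := X) (Y := (istar zC hzC i hi A).obj Y)).symm)
  have he : ∀ X Y Y' (g : Y ⟶ Y') (h : Fobj X ⟶ Y),
      e X Y' (h ≫ g) = e X Y h ≫ (istar zC hzC i hi A).map g := by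
    intro X Y Y' g h
    apply ObjectProperty.hom_ext
    show (adj.homEquiv X.obj Y'.obj) (pushout.inl _ _ ≫
        ((h.hom : LiAdjAux.plusF (i.obj zC) hi (i.lan.obj X.obj) ⟶ Y.obj) ≫ (g.hom : Y.obj ⟶ Y'.obj))) =
      (adj.homEquiv X.obj Y.obj) (pushout.inl _ _ ≫
        (h.hom : LiAdjAux.plusF (i.obj zC) hi (i.lan.obj X.obj) ⟶ Y.obj)) ≫
        Functor.whiskerLeft i (g.hom : Y.obj ⟶ Y'.obj)
    exact (congrArg (adj.homEquiv X.obj Y'.obj) (Category.assoc _ _ _).symm).trans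
      (adj.homEquiv_naturality_right _ _)
  exact ⟨Adjunction.leftAdjointOfEquiv e he, ⟨Adjunction.adjunctionOfEquivLeft e he⟩⟩
end

section
/- (Lemma "eta-iso".) Suppose the functor i : C ⥤ D is fully faithful. Then for any adjunction L ⊣ i^* with L : C*-A ⥤ D*-A, the unit η : 1_{C*-A} → i^* ∘ L is a natural isomorphism; equivalently, the left adjoint L is fully faithful. -/
open CategoryTheory CategoryTheory.Limits

universe v u

/-- Left Kan extension along `i` preserves pointedness, so it restricts to
`L' : C*-A ⥤ D*-A`. -/
noncomputable def lanPtd {C D : Type v} [SmallCategory C] [SmallCategory D]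
    (zC : C) (hzC : IsZero zC) (i : C ⥤ D) (hi : IsZero (i.obj zC))
    [i.Full] [i.Faithful]
    (A : Type u) [Category.{v} A] [HasColimits A] :
    PtdDiag C A ⥤ PtdDiag D A :=
  ObjectProperty.lift _
    (ObjectProperty.ι _ ⋙ i.lan)
    (fun X d hd => by
      obtain ⟨t⟩ := X.property zC hzC
      exact ⟨t.ofIso ((asIso ((i.lanUnit.app X.obj).app zC)) ≪≫
        (i.lan.obj X.obj).mapIso ((hd.iso hi).symm))⟩)

/-- The restricted adjunction `lanPtd ⊣ istar`. -/
noncomputable def lanPtdAdj {C D : Type v} [SmallCategory C] [SmallCategory D]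
    (zC : C) (hzC : IsZero zC) (i : C ⥤ D) (hi : IsZero (i.obj zC))
    [i.Full] [i.Faithful]
    (A : Type u) [Category.{v} A] [HasColimits A] :
    lanPtd zC hzC i hi A ⊣ istar zC hzC i hi A :=
  (i.lanAdjunction A).restrictFullyFaithful
    (ObjectProperty.fullyFaithfulι _)
    (ObjectProperty.fullyFaithfulι _)
    (ObjectProperty.liftCompιIso _ _ _).symm
    (ObjectProperty.liftCompιIso _ _ _).symm

theorem lanPtdAdj_unit_isIso {C D : Type v} [SmallCategory C] [SmallCategory D]
    (zC : C) (hzC : IsZero zC) (i : C ⥤ D) (hi : IsZero (i.obj zC))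
    [i.Full] [i.Faithful]
    (A : Type u) [Category.{v} A] [HasColimits A] :
    IsIso (lanPtdAdj zC hzC i hi A).unit := by
  have : ∀ X : PtdDiag C A, IsIso ((lanPtdAdj zC hzC i hi A).unit.app X) := by
    intro X
    have h : IsIso ((ObjectProperty.ι _).map
        ((lanPtdAdj zC hzC i hi A).unit.app X)) := by
      have e : (ObjectProperty.ι _).map ((lanPtdAdj zC hzC i hi A).unit.app X) =
          (i.lanAdjunction A).unit.app X.obj := by
        erw [lanPtdAdj, Adjunction.map_restrictFullyFaithful_unit_app]
        dsimp [ObjectProperty.liftCompιIso]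
        erw [CategoryTheory.Functor.map_id, Category.comp_id, Category.comp_id]
      rw [e]
      exact (inferInstance : IsIso ((i.lanAdjunction A).unit.app X.obj))
    exact isIso_of_reflects_iso _ (ObjectProperty.ι _)
  exact NatIso.isIso_of_isIso_app _

/-- **Lemma `eta-iso`.** If `i : C ⥤ D` is fully faithful, then for any adjunction
`L ⊣ i^*`, the unit `η : 1 → i^* ∘ L` is a natural isomorphism (equivalently, the
left adjoint `L` is fully faithful). -/
theorem unit_isIso_of_fullyFaithful {C D : Type v} [SmallCategory C] [SmallCategory D]
    (zC : C) (hzC : IsZero zC) (i : C ⥤ D) (hi : IsZero (i.obj zC))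
    [i.Full] [i.Faithful]
    (A : Type u) [Category.{v} A] [HasLimits A] [HasColimits A]
    (L : PtdDiag C A ⥤ PtdDiag D A) (adj : L ⊣ istar zC hzC i hi A) :
    IsIso adj.unit := by
  have h := Adjunction.unit_leftAdjointUniq_hom adj (lanPtdAdj zC hzC i hi A)
  have h1 : IsIso (lanPtdAdj zC hzC i hi A).unit := lanPtdAdj_unit_isIso zC hzC i hi A
  rw [← h] at h1
  exact IsIso.of_isIso_comp_right adj.unit
    (Functor.whiskerRight (adj.leftAdjointUniq (lanPtdAdj zC hzC i hi A)).hom (istar zC hzC i hi A))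
end

section
/- (Pointed Yoneda density, as used in the proof of Lemma "eta-iso".) Let C be a small category with a zero object, A a category with all small limits and all small colimits, X : C ⥤ A a functor sending the zero object of C to a terminal object of A, and p an object of C. Then the canonical morphism from the coend ∫^{n ∈ C} ⋁_{Hom°_C(n, p)} X(n) to X(p) — the unique morphism whose composite with each coend structure morphism, restricted to the wedge summand indexed by a nonzero morphism θ : n → p, equals X(θ) — is an isomorphism in A. -/
open CategoryTheory CategoryTheory.Limits

universe v u

/-- A morphism factors through a zero object (i.e. is a zero morphism). -/
def FactorsThroughZero {E : Type*} [Category E] {a b : E} (f : a ⟶ b) : Prop :=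
  ∃ (z : E) (_ : IsZero z) (g : a ⟶ z) (h : z ⟶ b), g ≫ h = f

/-- `Hom°(a, b)`: the set of nonzero morphisms from `a` to `b`. -/
def NonzeroHom {E : Type*} [Category E] (a b : E) : Type _ :=
  {f : a ⟶ b // ¬ FactorsThroughZero f}

variable {C : Type v} [SmallCategory C] {A : Type u} [Category.{v} A]
  [HasLimits A] [HasColimits A]

section

variable (zC : C) (hzC : IsZero zC) (X : C ⥤ A)
  (hX : ∀ c : C, IsZero c → Nonempty (IsTerminal (X.obj c))) (p : C)

/-- The wedge `⋁_{Hom°(n, p)} X(m)`: the wide pushout in `A` of copies of `X(m)` indexed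
by the nonzero morphisms `n ⟶ p`, under the terminal object `X(zC)`, each copy pointed by
the image under `X` of the unique morphism `zC ⟶ m`.  (When the indexing set is empty this
wide pushout is the terminal object `X(zC)`.) -/
noncomputable abbrev wedgeObj (n m : C) : A :=
  widePushout (X.obj zC) (fun _ : NonzeroHom n p => X.obj m) (fun _ => X.map (hzC.to_ m))

/-- The covariant action of the integrand, via `X`. -/
noncomputable def wedgeCov {m m' : C} (n : C) (g : m ⟶ m') :
    wedgeObj zC hzC X p n m ⟶ wedgeObj zC hzC X p n m' :=
  WidePushout.desc (WidePushout.head (fun _ : NonzeroHom n p => X.map (hzC.to_ m')))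
    (fun θ => X.map g ≫ WidePushout.ι (fun _ : NonzeroHom n p => X.map (hzC.to_ m')) θ)
    (fun θ => by
      rw [← Category.assoc, ← X.map_comp, hzC.eq_of_src (hzC.to_ m ≫ g) (hzC.to_ m')]
      exact WidePushout.arrow_ι (fun _ : NonzeroHom n p => X.map (hzC.to_ m')) θ)

open Classical in
/-- The contravariant action of the integrand, via precomposition of the indexing nonzero
morphisms; a composite which becomes zero is sent through the basepoint. -/
noncomputable def wedgeContra {n n' : C} (m : C) (h : n ⟶ n') :
    wedgeObj zC hzC X p n' m ⟶ wedgeObj zC hzC X p n m :=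
  WidePushout.desc (WidePushout.head (fun _ : NonzeroHom n p => X.map (hzC.to_ m)))
    (fun θ =>
      if hθ : FactorsThroughZero (h ≫ θ.val)
      then (hX zC hzC).some.from (X.obj m) ≫
        WidePushout.head (fun _ : NonzeroHom n p => X.map (hzC.to_ m))
      else WidePushout.ι (fun _ : NonzeroHom n p => X.map (hzC.to_ m))
        (⟨h ≫ θ.val, hθ⟩ : NonzeroHom n p))
    (fun θ => by
      beta_reduce
      split_ifs with hθ
      · rw [← Category.assoc,
          (hX zC hzC).some.hom_ext
            (X.map (hzC.to_ m) ≫ (hX zC hzC).some.from (X.obj m)) (𝟙 _),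
          Category.id_comp]
      · exact WidePushout.arrow_ι (fun _ : NonzeroHom n p => X.map (hzC.to_ m)) _)

/-- The coend `∫^{n ∈ C} ⋁_{Hom°(n, p)} X(n)`, presented as the coequalizer of the two
canonical morphisms `∐_{(f : n ⟶ n')} ⋁_{Hom°(n', p)} X(n) ⇉ ∐_{n} ⋁_{Hom°(n, p)} X(n)`
given by the contravariant and the covariant actions of the integrand. -/
noncomputable def wedgeCoend : A :=
  coequalizer
    (Sigma.desc (fun σ : Σ n n' : C, n ⟶ n' =>
      wedgeContra zC hzC X hX p σ.1 σ.2.2 ≫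
        Sigma.ι (fun n : C => wedgeObj zC hzC X p n n) σ.1))
    (Sigma.desc (fun σ : Σ n n' : C, n ⟶ n' =>
      wedgeCov zC hzC X p σ.2.1 σ.2.2 ≫
        Sigma.ι (fun n : C => wedgeObj zC hzC X p n n) σ.2.1))

/-- The canonical morphism from the coend `∫^{n ∈ C} ⋁_{Hom°(n, p)} X(n)` to `X(p)`: the
unique morphism whose composite with each coend structure morphism, restricted to the
wedge summand indexed by a nonzero morphism `θ : n ⟶ p`, equals `X(θ)`. -/
noncomputable def wedgeCoendToX : wedgeCoend zC hzC X hX p ⟶ X.obj p :=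
  coequalizer.desc
    (Sigma.desc fun n : C =>
      WidePushout.desc (X.map (hzC.to_ p)) (fun θ : NonzeroHom n p => X.map θ.val)
        (fun θ => by rw [← X.map_comp, hzC.eq_of_src (hzC.to_ n ≫ θ.val) (hzC.to_ p)]))
    (by
      apply CategoryTheory.Limits.Sigma.hom_ext
      intro σ
      obtain ⟨n, n', φ⟩ := σ
      rw [← Category.assoc, ← Category.assoc, CategoryTheory.Limits.Sigma.ι_desc, CategoryTheory.Limits.Sigma.ι_desc, Category.assoc, Category.assoc]
      simp only [CategoryTheory.Limits.Sigma.ι_desc]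
      unfold wedgeContra wedgeCov
      apply WidePushout.hom_ext
      · intro θ
        erw [← Category.assoc, ← Category.assoc, WidePushout.ι_desc, WidePushout.ι_desc,
          Category.assoc, WidePushout.ι_desc]
        split_ifs with hθ
        · obtain ⟨z, hz, g, h, hgh⟩ := hθ
          have e1 : X.map φ ≫ X.map θ.val = X.map g ≫ X.map h := by
            rw [← X.map_comp, ← X.map_comp, hgh]
          have e2 : X.map (hzC.to_ p) = X.map (hzC.to_ z) ≫ X.map h := by
            rw [← X.map_comp, hzC.eq_of_src (hzC.to_ p) (hzC.to_ z ≫ h)]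
          have e3 : (hX zC hzC).some.from (X.obj n) ≫ X.map (hzC.to_ z) = X.map g :=
            (hX z hz).some.hom_ext _ _
          rw [Category.assoc, WidePushout.head_desc, e1, e2, ← Category.assoc, e3]
        · erw [WidePushout.ι_desc, ← X.map_comp]
      · erw [← Category.assoc, ← Category.assoc, WidePushout.head_desc, WidePushout.head_desc,
          WidePushout.head_desc, WidePushout.head_desc])

/-- The structure morphism of the coend from the `n`-th wedge summand. -/
noncomputable def coendι (n : C) : wedgeObj zC hzC X p n n ⟶ wedgeCoend zC hzC X hX p :=
  Sigma.ι (fun n : C => wedgeObj zC hzC X p n n) n ≫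
    coequalizer.π
      (Sigma.desc (fun σ : Σ n n' : C, n ⟶ n' =>
        wedgeContra zC hzC X hX p σ.1 σ.2.2 ≫
          Sigma.ι (fun n : C => wedgeObj zC hzC X p n n) σ.1))
      (Sigma.desc (fun σ : Σ n n' : C, n ⟶ n' =>
        wedgeCov zC hzC X p σ.2.1 σ.2.2 ≫
          Sigma.ι (fun n : C => wedgeObj zC hzC X p n n) σ.2.1))

lemma coend_rel {n n' : C} (φ : n ⟶ n') :
    wedgeContra zC hzC X hX p n φ ≫ coendι zC hzC X hX p n =
      wedgeCov zC hzC X p n' φ ≫ coendι zC hzC X hX p n' := by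
  have h := coequalizer.condition
    (Sigma.desc (fun σ : Σ n n' : C, n ⟶ n' =>
      wedgeContra zC hzC X hX p σ.1 σ.2.2 ≫
        Sigma.ι (fun n : C => wedgeObj zC hzC X p n n) σ.1))
    (Sigma.desc (fun σ : Σ n n' : C, n ⟶ n' =>
      wedgeCov zC hzC X p σ.2.1 σ.2.2 ≫
        Sigma.ι (fun n : C => wedgeObj zC hzC X p n n) σ.2.1))
  have h2 := Sigma.ι (fun σ : Σ n n' : C, n ⟶ n' => wedgeObj zC hzC X p σ.2.1 σ.1)
    (⟨n, n', φ⟩ : Σ n n' : C, n ⟶ n') ≫= h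
  simp only [← Category.assoc, Sigma.ι_desc] at h2
  simpa [coendι, wedgeCoend, Category.assoc] using h2

lemma coend_head_rel {n n' : C} (φ : n ⟶ n') :
    WidePushout.head (fun _ : NonzeroHom n p => X.map (hzC.to_ n)) ≫
        coendι zC hzC X hX p n =
      WidePushout.head (fun _ : NonzeroHom n' p => X.map (hzC.to_ n')) ≫
        coendι zC hzC X hX p n' := by
  have h := WidePushout.head (fun _ : NonzeroHom n' p => X.map (hzC.to_ n)) ≫=
    coend_rel zC hzC X hX p φ
  simp only [wedgeContra, wedgeCov, ← Category.assoc] at h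
  erw [WidePushout.head_desc, WidePushout.head_desc] at h
  exact h

lemma coend_head_eq (n : C) :
    WidePushout.head (fun _ : NonzeroHom n p => X.map (hzC.to_ n)) ≫
        coendι zC hzC X hX p n =
      WidePushout.head (fun _ : NonzeroHom zC p => X.map (hzC.to_ zC)) ≫
        coendι zC hzC X hX p zC :=
  (coend_head_rel zC hzC X hX p (hzC.to_ n)).symm

open Classical in
lemma coend_ι_rel {n n' : C} (φ : n ⟶ n') (θ : NonzeroHom n' p) :
    X.map φ ≫ WidePushout.ι (fun _ : NonzeroHom n' p => X.map (hzC.to_ n')) θ ≫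
        coendι zC hzC X hX p n' =
      (if hθ : FactorsThroughZero (φ ≫ θ.val)
       then (hX zC hzC).some.from (X.obj n) ≫
         WidePushout.head (fun _ : NonzeroHom n p => X.map (hzC.to_ n))
       else WidePushout.ι (fun _ : NonzeroHom n p => X.map (hzC.to_ n)) ⟨φ ≫ θ.val, hθ⟩) ≫
        coendι zC hzC X hX p n := by
  have h := WidePushout.ι (fun _ : NonzeroHom n' p => X.map (hzC.to_ n)) θ ≫=
    coend_rel zC hzC X hX p φ
  simp only [← Category.assoc, wedgeContra, wedgeCov, WidePushout.ι_desc] at h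
  simpa [Category.assoc] using h.symm

open Classical in
/-- The inverse morphism `X(p) ⟶ ∫^{n ∈ C} ⋁_{Hom°(n, p)} X(n)`. -/
noncomputable def wedgeXToCoend : X.obj p ⟶ wedgeCoend zC hzC X hX p :=
  (if hp : FactorsThroughZero (𝟙 p)
   then (hX zC hzC).some.from (X.obj p) ≫
     WidePushout.head (fun _ : NonzeroHom p p => X.map (hzC.to_ p))
   else WidePushout.ι (fun _ : NonzeroHom p p => X.map (hzC.to_ p)) ⟨𝟙 p, hp⟩) ≫
    coendι zC hzC X hX p p

lemma coendι_comp_toX (n : C) :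
    coendι zC hzC X hX p n ≫ wedgeCoendToX zC hzC X hX p =
      WidePushout.desc (X.map (hzC.to_ p)) (fun θ : NonzeroHom n p => X.map θ.val)
        (fun θ => by rw [← X.map_comp, hzC.eq_of_src (hzC.to_ n ≫ θ.val) (hzC.to_ p)]) := by
  simp only [coendι, wedgeCoendToX, wedgeCoend, Category.assoc, coequalizer.π_desc, Sigma.ι_desc]

lemma from_comp_map {a : C} (f : a ⟶ p) (hf : FactorsThroughZero f) :
    (hX zC hzC).some.from (X.obj a) ≫ X.map (hzC.to_ p) = X.map f := by
  obtain ⟨z, hz, g, h, hgh⟩ := hf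
  have e2 : X.map (hzC.to_ p) = X.map (hzC.to_ z) ≫ X.map h := by
    rw [← X.map_comp, hzC.eq_of_src (hzC.to_ p) (hzC.to_ z ≫ h)]
  have e3 : (hX zC hzC).some.from (X.obj a) ≫ X.map (hzC.to_ z) = X.map g :=
    (hX z hz).some.hom_ext _ _
  rw [e2, ← Category.assoc, e3, ← X.map_comp, hgh]

lemma xmap_comp_inv (n : C) (f : n ⟶ p) (hf : ¬ FactorsThroughZero f) :
    X.map f ≫ wedgeXToCoend zC hzC X hX p =
      WidePushout.ι (fun _ : NonzeroHom n p => X.map (hzC.to_ n)) ⟨f, hf⟩ ≫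
        coendι zC hzC X hX p n := by
  rw [wedgeXToCoend]
  split_ifs with hp
  · exact absurd (by
      obtain ⟨z, hz, g, h, hgh⟩ := hp
      exact ⟨z, hz, f ≫ g, h, by rw [Category.assoc, hgh, Category.comp_id]⟩) hf
  · have e : (⟨f ≫ 𝟙 p, by simpa using hf⟩ : NonzeroHom n p) = ⟨f, hf⟩ :=
      Subtype.ext (Category.comp_id f)
    have h := coend_ι_rel zC hzC X hX p f (⟨𝟙 p, hp⟩ : NonzeroHom p p)
    rw [dif_neg (show ¬ FactorsThroughZero (f ≫ 𝟙 p) by simpa using hf), e] at h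
    exact h

lemma head_comp_inv :
    X.map (hzC.to_ p) ≫ wedgeXToCoend zC hzC X hX p =
      WidePushout.head (fun _ : NonzeroHom zC p => X.map (hzC.to_ zC)) ≫
        coendι zC hzC X hX p zC := by
  rw [wedgeXToCoend]
  split_ifs with hp
  · rw [← Category.assoc, ← Category.assoc,
      (hX zC hzC).some.hom_ext
        (X.map (hzC.to_ p) ≫ (hX zC hzC).some.from (X.obj p)) (𝟙 _),
      Category.id_comp]
    exact coend_head_eq zC hzC X hX p p
  · have h := coend_ι_rel zC hzC X hX p (hzC.to_ p) (⟨𝟙 p, hp⟩ : NonzeroHom p p)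
    rw [dif_pos ⟨zC, hzC, 𝟙 zC, hzC.to_ p ≫ 𝟙 p, Category.id_comp _⟩] at h
    rw [h, (hX zC hzC).some.hom_ext ((hX zC hzC).some.from (X.obj zC)) (𝟙 _),
      Category.id_comp]

lemma wedge_desc_comp_inv (n : C) :
    WidePushout.desc (X.map (hzC.to_ p)) (fun θ : NonzeroHom n p => X.map θ.val)
        (fun θ => by rw [← X.map_comp, hzC.eq_of_src (hzC.to_ n ≫ θ.val) (hzC.to_ p)]) ≫
      wedgeXToCoend zC hzC X hX p = coendι zC hzC X hX p n := by
  apply colimit.hom_ext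
  rintro (_ | θ)
  · show WidePushout.head _ ≫ _ = WidePushout.head _ ≫ _
    erw [← Category.assoc, WidePushout.head_desc, head_comp_inv]
    exact (coend_head_eq zC hzC X hX p n).symm
  · show WidePushout.ι _ θ ≫ _ = WidePushout.ι _ θ ≫ _
    rw [← Category.assoc, WidePushout.ι_desc]
    exact xmap_comp_inv zC hzC X hX p n θ.val θ.property

/-- **Pointed Yoneda density** (as used in the proof of Lemma `eta-iso`): if `X : C ⥤ A`
sends the zero object of `C` to a terminal object of `A`, then the canonical morphism
`∫^{n ∈ C} ⋁_{Hom°(n, p)} X(n) ⟶ X(p)` is an isomorphism in `A`. -/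
theorem wedgeCoendToX_isIso : IsIso (wedgeCoendToX zC hzC X hX p) := by
  refine ⟨wedgeXToCoend zC hzC X hX p, ?_, ?_⟩
  · apply coequalizer.hom_ext
    erw [← Category.assoc, wedgeCoendToX, coequalizer.π_desc]
    apply CategoryTheory.Limits.Sigma.hom_ext
    intro n
    rw [← Category.assoc, Sigma.ι_desc]
    erw [Category.comp_id]
    exact wedge_desc_comp_inv zC hzC X hX p n
  · rw [wedgeXToCoend]
    split_ifs with hp
    · rw [Category.assoc, Category.assoc, coendι_comp_toX, WidePushout.head_desc,
        from_comp_map zC hzC X hX p (𝟙 p) hp, X.map_id]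
    · erw [Category.assoc, coendι_comp_toX, WidePushout.ι_desc, X.map_id]

end
end
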